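/- arXiv:2003.04520 — 2 statements merged into one kernel-verified Lean document; each statement's English description precedes it below -/
import Mathlib

section
/- Let H be a positive semidefinite n×n block matrix with k×k blocks. Then (det(tr₂H)/kⁿ)^k ≥ det H, where tr₂H = [tr H_{i,j}]_{i,j=1}^n. -/
open Matrix BigOperators ComplexOrder

set_option linter.unusedSectionVars false
set_option maxHeartbeats 1000000
namespace FMaux

variable {m : Type*} [Fintype m] [DecidableEq m]

/-- det of a Hermitian matrix is real. -/
lemma det_eq_re' {M : Matrix m m ℂ} (hM : M.IsHermitian) :
    M.det = ((∏ i, hM.eigenvalues i : ℝ) : ℂ) := by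
  rw [hM.det_eq_prod_eigenvalues]
  norm_cast

lemma det_eq_re {M : Matrix m m ℂ} (hM : M.IsHermitian) : M.det = (M.det.re : ℂ) := by
  rw [det_eq_re' hM, Complex.ofReal_re]

lemma det_re_nonneg {M : Matrix m m ℂ} (hM : M.PosSemidef) : 0 ≤ M.det.re := by
  rw [det_eq_re' hM.1, Complex.ofReal_re]
  exact Finset.prod_nonneg fun i _ => hM.eigenvalues_nonneg i

lemma det_re_pos {M : Matrix m m ℂ} (hM : M.PosDef) : 0 < M.det.re := by
  have h := hM.det_pos
  have h2 := det_eq_re hM.1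
  rw [h2] at h
  exact_mod_cast h

/-- PSD with nonzero determinant is PD. -/
lemma posDef_of_det_ne_zero {M : Matrix m m ℂ} (hM : M.PosSemidef) (h : M.det ≠ 0) :
    M.PosDef := by
  refine Matrix.PosDef.of_dotProduct_mulVec_pos hM.1 fun x hx => ?_
  have h1 : M *ᵥ x ≠ 0 := fun hMx =>
    h (Matrix.exists_mulVec_eq_zero_iff.mp ⟨x, hx, hMx⟩)
  have h2 : star x ⬝ᵥ M *ᵥ x ≠ 0 := fun hc => h1 ((hM.dotProduct_mulVec_zero_iff x).mp hc)
  exact lt_of_le_of_ne (hM.dotProduct_mulVec_nonneg x) (Ne.symm h2)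

lemma smul_posSemidef {M : Matrix m m ℂ} (hM : M.PosSemidef) {r : ℝ} (hr : 0 ≤ r) :
    ((r : ℂ) • M).PosSemidef := by
  refine Matrix.PosSemidef.of_dotProduct_mulVec_nonneg ?_ ?_
  · unfold Matrix.IsHermitian
    rw [conjTranspose_smul, hM.1.eq]
    congr 1
    simp
  · intro x
    rw [smul_mulVec, dotProduct_smul, smul_eq_mul]
    exact mul_nonneg (by exact_mod_cast hr) (hM.dotProduct_mulVec_nonneg x)

lemma smul_det_re (r : ℝ) (M : Matrix m m ℂ) :
    ((r : ℂ) • M).det.re = r ^ (Fintype.card m) * M.det.re := by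
  rw [Matrix.det_smul, ← Complex.ofReal_pow, Complex.re_ofReal_mul]

lemma det_smul_one_add_smul (c d : ℝ) {Z : Matrix m m ℂ} (hZ : Z.IsHermitian) :
    ((c : ℂ) • 1 + (d : ℂ) • Z).det = ((∏ i, (c + d * hZ.eigenvalues i) : ℝ) : ℂ) := by
  set U : Matrix m m ℂ := (hZ.eigenvectorUnitary : Matrix m m ℂ) with hU
  have hUU : U * star U = 1 := Matrix.mem_unitaryGroup_iff.mp hZ.eigenvectorUnitary.2
  have key : (c : ℂ) • 1 + (d : ℂ) • Z
      = U * ((c : ℂ) • 1 + (d : ℂ) • diagonal (RCLike.ofReal ∘ hZ.eigenvalues)) * star U := by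
    rw [Matrix.mul_add, Matrix.add_mul]
    congr 1
    · rw [Matrix.mul_smul, Matrix.smul_mul, Matrix.mul_one, hUU]
    · conv_lhs => rw [hZ.spectral_theorem, Unitary.conjStarAlgAut_apply]
      rw [Matrix.mul_smul, Matrix.smul_mul]
  rw [key, Matrix.det_mul, Matrix.det_mul, mul_comm (U.det), mul_assoc, ← Matrix.det_mul, hUU,
    Matrix.det_one, mul_one]
  have : (c : ℂ) • (1 : Matrix m m ℂ) + (d : ℂ) • diagonal (RCLike.ofReal ∘ hZ.eigenvalues)
      = diagonal fun i => ((c + d * hZ.eigenvalues i : ℝ) : ℂ) := by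
    ext i j
    rcases eq_or_ne i j with rfl | h
    · simp [Matrix.one_apply_eq]
    · simp [Matrix.diagonal_apply_ne _ h, Matrix.one_apply_ne h]
  rw [this, Matrix.det_diagonal]
  norm_cast

open scoped MatrixOrder in
/-- Congruence reduction: for `A` posdef, `B` psd. -/
lemma congr_core {A B : Matrix m m ℂ} (hA : A.PosDef) (hB : B.PosSemidef) (c d : ℝ) :
    ∃ Z : Matrix m m ℂ, Z.PosSemidef ∧ A.det * Z.det = B.det ∧
      ((c : ℂ) • A + (d : ℂ) • B).det = A.det * ((c : ℂ) • 1 + (d : ℂ) • Z).det := by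
  set S := CFC.sqrt A with hS
  have hSpsd : S.PosSemidef := Matrix.nonneg_iff_posSemidef.mp (CFC.sqrt_nonneg A)
  have hSS : S * S = A := CFC.sqrt_mul_sqrt_self A (Matrix.nonneg_iff_posSemidef.mpr hA.posSemidef)
  have hdetS : S.det ≠ 0 := by
    intro h0
    have : A.det = 0 := by rw [← hSS, Matrix.det_mul, h0, zero_mul]
    exact hA.det_pos.ne' this
  have hSinvH : S⁻¹ᴴ = S⁻¹ := by rw [Matrix.conjTranspose_nonsing_inv, hSpsd.1.eq]
  refine ⟨S⁻¹ * B * S⁻¹, ?_, ?_, ?_⟩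
  · have := hB.conjTranspose_mul_mul_same S⁻¹
    rwa [hSinvH] at this
  · rw [Matrix.det_mul, Matrix.det_mul, Matrix.det_nonsing_inv, Ring.inverse_eq_inv']
    rw [← hSS, Matrix.det_mul]
    field_simp
  · have hinv : S * S⁻¹ = 1 := Matrix.mul_nonsing_inv S (Ne.isUnit hdetS)
    have key : (c : ℂ) • A + (d : ℂ) • B = S * ((c : ℂ) • 1 + (d : ℂ) • (S⁻¹ * B * S⁻¹)) * S := by
      rw [Matrix.mul_add, Matrix.add_mul, Matrix.mul_smul, Matrix.smul_mul, Matrix.mul_one, hSS,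
        Matrix.mul_smul, Matrix.smul_mul]
      congr 2
      rw [show S * (S⁻¹ * B * S⁻¹) * S = (S * S⁻¹) * B * (S⁻¹ * S) by
            simp only [Matrix.mul_assoc], hinv, Matrix.nonsing_inv_mul S (Ne.isUnit hdetS),
        Matrix.one_mul, Matrix.mul_one]
    rw [key, Matrix.det_mul, Matrix.det_mul, ← hSS, Matrix.det_mul]
    ring


/-- Monotonicity: det X ≤ det (X+Y) for psd X, Y. -/
lemma det_re_mono {X Y : Matrix m m ℂ} (hX : X.PosSemidef) (hY : Y.PosSemidef) :
    X.det.re ≤ (X + Y).det.re := by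
  rcases eq_or_ne X.det 0 with h0 | h0
  · rw [h0]
    simpa using det_re_nonneg (hX.add hY)
  · have hXpd : X.PosDef := posDef_of_det_ne_zero hX h0
    obtain ⟨Z, hZ, -, hkey⟩ := congr_core hXpd hY 1 1
    simp only [Complex.ofReal_one, one_smul] at hkey
    have e0 : (1 : Matrix m m ℂ) + Z = ((1:ℝ) : ℂ) • 1 + ((1:ℝ) : ℂ) • Z := by norm_num
    have h1 : (X + Y).det.re = X.det.re * ∏ i, (1 + 1 * hZ.1.eigenvalues i) := by
      rw [hkey, e0, det_smul_one_add_smul 1 1 hZ.1, det_eq_re hXpd.1, ← Complex.ofReal_mul,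
        Complex.ofReal_re]
      simp
    rw [h1]
    nth_rewrite 1 [← mul_one X.det.re]
    refine mul_le_mul_of_nonneg_left ?_ (det_re_pos hXpd).le
    calc (1:ℝ) = ∏ _i : m, (1:ℝ) := by simp
      _ ≤ ∏ i, (1 + 1 * hZ.1.eigenvalues i) := by
          refine Finset.prod_le_prod (fun i _ => zero_le_one) (fun i _ => ?_)
          have := hZ.eigenvalues_nonneg i
          linarith

/-- Two-matrix log-concavity of determinant (weighted AM-GM form). -/
lemma det_re_weighted {A B : Matrix m m ℂ} (hA : A.PosSemidef) (hB : B.PosSemidef)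
    {c d : ℝ} (hc : 0 ≤ c) (hd : 0 ≤ d) (hcd : c + d = 1) :
    A.det.re ^ c * B.det.re ^ d ≤ ((c : ℂ) • A + (d : ℂ) • B).det.re := by
  rcases eq_or_lt_of_le hc with rfl | hc'
  · have hd1 : d = 1 := by linarith
    subst hd1
    simp [Real.rpow_natCast]
  rcases eq_or_ne A.det 0 with h0 | h0
  · have hAre : A.det.re = 0 := by rw [h0]; rfl
    rw [hAre, Real.zero_rpow hc'.ne']
    rw [zero_mul]
    exact det_re_nonneg ((smul_posSemidef hA hc).add (smul_posSemidef hB hd))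
  · have hApd : A.PosDef := posDef_of_det_ne_zero hA h0
    obtain ⟨Z, hZ, hdet, hkey⟩ := congr_core hApd hB c d
    have hAre : 0 < A.det.re := det_re_pos hApd
    have hZre : 0 ≤ Z.det.re := det_re_nonneg hZ
    -- value of the rhs
    have h1 : ((c : ℂ) • A + (d : ℂ) • B).det.re
        = A.det.re * ∏ i, (c + d * hZ.1.eigenvalues i) := by
      rw [hkey, det_smul_one_add_smul c d hZ.1, det_eq_re hApd.1, ← Complex.ofReal_mul,
        Complex.ofReal_re]
      simp
    -- B.det.re = A.det.re * Z.det.re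
    have h2 : B.det.re = A.det.re * Z.det.re := by
      have h := congrArg Complex.re hdet
      rw [det_eq_re hApd.1, det_eq_re hZ.1, ← Complex.ofReal_mul, Complex.ofReal_re] at h
      exact h.symm
    -- AM-GM on each eigenvalue
    have h3 : (∏ i, hZ.1.eigenvalues i) ^ d ≤ ∏ i, (c + d * hZ.1.eigenvalues i) := by
      rw [← Real.finset_prod_rpow _ _ (fun i _ => hZ.eigenvalues_nonneg i)]
      refine Finset.prod_le_prod (fun i _ => Real.rpow_nonneg (hZ.eigenvalues_nonneg i) d)
        (fun i _ => ?_)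
      have := Real.geom_mean_le_arith_mean2_weighted hc hd zero_le_one
        (hZ.eigenvalues_nonneg i) hcd
      simpa using this
    have h4 : Z.det.re = ∏ i, hZ.1.eigenvalues i := by
      rw [det_eq_re' hZ.1, Complex.ofReal_re]
    rw [h1]
    calc A.det.re ^ c * B.det.re ^ d
        = A.det.re ^ c * (A.det.re ^ d * Z.det.re ^ d) := by
          rw [h2, Real.mul_rpow hAre.le hZre]
      _ = A.det.re * Z.det.re ^ d := by
          rw [← mul_assoc, ← Real.rpow_add hAre, hcd, Real.rpow_one]
      _ ≤ A.det.re * ∏ i, (c + d * hZ.1.eigenvalues i) := by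
          refine mul_le_mul_of_nonneg_left ?_ hAre.le
          rw [h4]
          exact h3

lemma sum_posSemidef {ι : Type*} [Fintype ι] (f : ι → Matrix m m ℂ)
    (h : ∀ i, (f i).PosSemidef) : (∑ i, f i).PosSemidef := by
  classical
  exact Finset.sum_induction f _ (fun a b ha hb => ha.add hb) Matrix.PosSemidef.zero
    (fun i _ => h i)

lemma multi {n : ℕ} : ∀ (k : ℕ) (A : Fin (k+1) → Matrix (Fin n) (Fin n) ℂ),
    (∀ l, (A l).PosSemidef) →
    ((k : ℝ) + 1) ^ n * (∏ l, (A l).det.re) ^ (((k : ℝ) + 1)⁻¹) ≤ (∑ l, A l).det.re := by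
  intro k
  induction k with
  | zero =>
    intro A hA
    have h1 : (∑ l : Fin 1, A l) = A 0 := by simp
    have h2 : (∏ l : Fin 1, (A l).det.re) = (A 0).det.re := by simp
    rw [h1, h2]
    norm_num
  | succ k ih =>
    intro A hA
    set K : ℝ := (k : ℝ) + 1 with hK
    have hKpos : 0 < K := by positivity
    set K2 : ℝ := K + 1 with hK2
    have hK2pos : 0 < K2 := by positivity
    set c : ℝ := K / K2 with hcdef
    set d : ℝ := 1 / K2 with hddef
    have hc0 : 0 < c := by positivity
    have hd0 : 0 < d := by positivity
    have hcd : c + d = 1 := by rw [hcdef, hddef]; field_simp; rw [hK2]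
    set B : Matrix (Fin n) (Fin n) ℂ := ∑ l : Fin (k+1), A l.castSucc with hBdef
    set La : Matrix (Fin n) (Fin n) ℂ := A (Fin.last (k+1)) with hLa
    have hBpsd : B.PosSemidef := sum_posSemidef _ (fun l => hA _)
    have hLpsd : La.PosSemidef := hA _
    have hsum : (∑ l, A l) = B + La := Fin.sum_univ_castSucc A
    set P : ℝ := ∏ l : Fin (k+1), (A l.castSucc).det.re with hP
    have hPnn : 0 ≤ P := Finset.prod_nonneg fun l _ => det_re_nonneg (hA _)
    have hLnn : 0 ≤ La.det.re := det_re_nonneg hLpsd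
    have hIH := ih (fun l => A l.castSucc) (fun l => hA _)
    set X : Matrix (Fin n) (Fin n) ℂ := ((c⁻¹ : ℝ) : ℂ) • B with hX
    set Y : Matrix (Fin n) (Fin n) ℂ := ((d⁻¹ : ℝ) : ℂ) • La with hY
    have hXpsd : X.PosSemidef := smul_posSemidef hBpsd (by positivity)
    have hYpsd : Y.PosSemidef := smul_posSemidef hLpsd (by positivity)
    have hcomb : (c : ℂ) • X + (d : ℂ) • Y = B + La := by
      rw [hX, hY, smul_smul, smul_smul, ← Complex.ofReal_mul, ← Complex.ofReal_mul,
        mul_inv_cancel₀ hc0.ne', mul_inv_cancel₀ hd0.ne']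
      simp
    have hmain := det_re_weighted hXpsd hYpsd hc0.le hd0.le hcd
    rw [hcomb] at hmain
    have hXdet : X.det.re = c⁻¹ ^ n * B.det.re := by
      rw [hX, smul_det_re, Fintype.card_fin]
    have hYdet : Y.det.re = d⁻¹ ^ n * La.det.re := by
      rw [hY, smul_det_re, Fintype.card_fin]
    have hXlb : K2 ^ n * P ^ K⁻¹ ≤ X.det.re := by
      rw [hXdet]
      calc K2 ^ n * P ^ K⁻¹ = c⁻¹ ^ n * (K ^ n * P ^ K⁻¹) := by
            rw [← mul_assoc, ← mul_pow]
            congr 2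
            rw [hcdef]
            field_simp
          _ ≤ c⁻¹ ^ n * B.det.re := mul_le_mul_of_nonneg_left hIH (by positivity)
    have hstep : (K2 ^ n * P ^ K⁻¹) ^ c * (d⁻¹ ^ n * La.det.re) ^ d
        ≤ X.det.re ^ c * Y.det.re ^ d := by
      rw [hYdet]
      exact mul_le_mul_of_nonneg_right (Real.rpow_le_rpow (by positivity) hXlb hc0.le)
        (by positivity)
    have hdinv : d⁻¹ = K2 := by rw [hddef]; field_simp
    have hQ : (0:ℝ) < K2 ^ n := by positivity
    have key : (K2 ^ n * P ^ K⁻¹) ^ c * (d⁻¹ ^ n * La.det.re) ^ d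
        = K2 ^ n * (P * La.det.re) ^ K2⁻¹ := by
      rw [hdinv, Real.mul_rpow (by positivity) (by positivity),
        Real.mul_rpow (by positivity) hLnn]
      have e1 : (P ^ K⁻¹) ^ c = P ^ K2⁻¹ := by
        rw [← Real.rpow_mul hPnn]
        congr 1
        rw [hcdef]
        field_simp
      have e2 : La.det.re ^ d = La.det.re ^ K2⁻¹ := by rw [hddef, one_div]
      rw [e1, e2]
      calc (K2^n)^c * P ^ K2⁻¹ * ((K2^n)^d * La.det.re ^ K2⁻¹)
          = ((K2^n)^c * (K2^n)^d) * (P ^ K2⁻¹ * La.det.re ^ K2⁻¹) := by ring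
        _ = K2 ^ n * (P * La.det.re) ^ K2⁻¹ := by
            rw [← Real.rpow_add hQ, hcd, Real.rpow_one, ← Real.mul_rpow hPnn hLnn]
    have hcast : ((k + 1 : ℕ) : ℝ) + 1 = K2 := by rw [hK2, hK]; push_cast; ring
    have hprodall : (∏ l : Fin (k+1+1), (A l).det.re) = P * La.det.re := by
      rw [hP, Fin.prod_univ_castSucc]
    rw [hcast, hprodall, hsum]
    calc K2 ^ n * (P * La.det.re) ^ K2⁻¹
        = (K2 ^ n * P ^ K⁻¹) ^ c * (d⁻¹ ^ n * La.det.re) ^ d := key.symm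
      _ ≤ X.det.re ^ c * Y.det.re ^ d := hstep
      _ ≤ (B + La).det.re := hmain

lemma fischer2 {α β : Type*} [Fintype α] [DecidableEq α] [Fintype β] [DecidableEq β]
    (M : Matrix (α ⊕ β) (α ⊕ β) ℂ) (hM : M.PosSemidef) :
    M.det.re ≤ M.toBlocks₁₁.det.re * M.toBlocks₂₂.det.re := by
  set A := M.toBlocks₁₁ with hA
  set Bm := M.toBlocks₁₂ with hB
  set D := M.toBlocks₂₂ with hD
  have hApsd : A.PosSemidef := hM.submatrix Sum.inl
  have hDpsd : D.PosSemidef := hM.submatrix Sum.inr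
  have hC : M.toBlocks₂₁ = Bmᴴ := by
    ext i j
    exact (hM.1.apply _ _).symm
  have hMblocks : M = fromBlocks A Bm Bmᴴ D := by
    rw [← hC, hA, hB, hD, fromBlocks_toBlocks]
  rcases eq_or_ne A.det 0 with h0 | h0
  · obtain ⟨x, hx, hAx⟩ := (Matrix.exists_mulVec_eq_zero_iff).mpr h0
    set v : α ⊕ β → ℂ := Sum.elim x 0 with hv
    have hvne : v ≠ 0 := by
      intro h
      apply hx
      funext i
      exact congrFun h (Sum.inl i)
    have hform : star v ⬝ᵥ M *ᵥ v = 0 := by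
      rw [hMblocks]
      have hMv : (fromBlocks A Bm Bmᴴ D) *ᵥ v = Sum.elim (0 : α → ℂ) (Bmᴴ *ᵥ x) := by
        rw [hv, fromBlocks_mulVec]
        simp [hAx]
      rw [hMv, dotProduct_block]
      have hz : star (x ⊕ᵥ (0 : β → ℂ)) ∘ Sum.inr = (0 : β → ℂ) := by
        funext i
        simp
      simp [show star v ∘ Sum.inr = (0 : β → ℂ) from hz]
    have hMv0 : M *ᵥ v = 0 := (hM.dotProduct_mulVec_zero_iff v).mp hform
    have hMdet : M.det = 0 := Matrix.exists_mulVec_eq_zero_iff.mp ⟨v, hvne, hMv0⟩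
    have hAre : A.det.re = 0 := by rw [h0]; rfl
    rw [hMdet, hAre, zero_mul]
    norm_num
  · have hApd : A.PosDef := posDef_of_det_ne_zero hApsd h0
    haveI := Matrix.invertibleOfIsUnitDet A (Ne.isUnit h0)
    have hSchurPsd : (D - Bmᴴ * A⁻¹ * Bm).PosSemidef := by
      rw [← Matrix.PosDef.fromBlocks₁₁ Bm D hApd, ← hMblocks]
      exact hM
    have hdet : M.det = A.det * (D - Bmᴴ * A⁻¹ * Bm).det := by
      conv_lhs => rw [hMblocks]
      rw [Matrix.det_fromBlocks₁₁, Matrix.invOf_eq_nonsing_inv]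
    have h2 : (Bmᴴ * A⁻¹ * Bm).PosSemidef :=
      (hApd.inv).posSemidef.conjTranspose_mul_mul_same Bm
    have hmono : (D - Bmᴴ * A⁻¹ * Bm).det.re ≤ D.det.re := by
      have h3 := det_re_mono hSchurPsd h2
      rwa [sub_add_cancel] at h3
    have hre : M.det.re = A.det.re * (D - Bmᴴ * A⁻¹ * Bm).det.re := by
      rw [hdet, det_eq_re hApd.1, det_eq_re hSchurPsd.1, ← Complex.ofReal_mul, Complex.ofReal_re]
      simp
    rw [hre]
    exact mul_le_mul_of_nonneg_left hmono (det_re_pos hApd).le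

def splitEquiv (n k : ℕ) : (Fin n ⊕ Fin n × Fin k) ≃ Fin n × Fin (k+1) where
  toFun := Sum.elim (fun i => (i, 0)) (fun p => (p.1, p.2.succ))
  invFun := fun p => Fin.cases (Sum.inl p.1) (fun l => Sum.inr (p.1, l)) p.2
  left_inv := by rintro (i | ⟨i, l⟩) <;> simp
  right_inv := by
    rintro ⟨i, l⟩
    induction l using Fin.cases <;> simp

lemma fischer_iter {n : ℕ} : ∀ (k : ℕ) (H : Matrix (Fin n × Fin k) (Fin n × Fin k) ℂ),
    H.PosSemidef →
    H.det.re ≤ ∏ l : Fin k, (Matrix.of fun i j : Fin n => H (i, l) (j, l)).det.re := by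
  intro k
  induction k with
  | zero =>
    intro H hH
    rw [Matrix.det_isEmpty]
    simp
  | succ k ih =>
    intro H hH
    set e := splitEquiv n k with he
    set M := H.submatrix e e with hMdef
    have hMpsd : M.PosSemidef := hH.submatrix e
    have hdet : M.det = H.det := Matrix.det_submatrix_equiv_self e H
    have hF := fischer2 M hMpsd
    set H' : Matrix (Fin n × Fin k) (Fin n × Fin k) ℂ :=
      Matrix.of fun p q => H (p.1, p.2.succ) (q.1, q.2.succ) with hH'
    have hb1 : M.toBlocks₁₁ = Matrix.of fun i j : Fin n => H (i, 0) (j, 0) := rfl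
    have hb2 : M.toBlocks₂₂ = H' := rfl
    have hH'psd : H'.PosSemidef := hH.submatrix (fun p : Fin n × Fin k => (p.1, p.2.succ))
    have hIH := ih H' hH'psd
    have hre : M.det.re = H.det.re := by rw [hdet]
    calc H.det.re = M.det.re := hre.symm
      _ ≤ M.toBlocks₁₁.det.re * M.toBlocks₂₂.det.re := hF
      _ ≤ (Matrix.of fun i j : Fin n => H (i, 0) (j, 0)).det.re *
            ∏ l : Fin k, (Matrix.of fun i j : Fin n => H (i, l.succ) (j, l.succ)).det.re := by
          rw [hb1, hb2]
          exact mul_le_mul_of_nonneg_left hIH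
            (det_re_nonneg (hH.submatrix fun i : Fin n => (i, (0 : Fin (k+1)))))
      _ = ∏ l : Fin (k+1), (Matrix.of fun i j : Fin n => H (i, l) (j, l)).det.re := by
          rw [Fin.prod_univ_succ]

end FMaux

/-- Second partial trace: matrix of traces of the blocks. -/
noncomputable def ptrace2 {n k : ℕ} (H : Matrix (Fin n × Fin k) (Fin n × Fin k) ℂ) :
    Matrix (Fin n) (Fin n) ℂ :=
  Matrix.of fun i j => ∑ l : Fin k, H (i, l) (j, l)

/-- Strong Fiedler–Markham: (det(tr₂H)/kⁿ)^k ≥ det H. -/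
theorem stmt2 {n k : ℕ} (hn : 0 < n) (hk : 0 < k)
    (H : Matrix (Fin n × Fin k) (Fin n × Fin k) ℂ) (hH : H.PosSemidef) :
    ((ptrace2 H).det.re / (k : ℝ) ^ n) ^ k ≥ H.det.re := by
  obtain ⟨k', rfl⟩ : ∃ k', k = k' + 1 := ⟨k - 1, (Nat.succ_pred_eq_of_pos hk).symm⟩
  set A : Fin (k'+1) → Matrix (Fin n) (Fin n) ℂ :=
    fun l => Matrix.of fun i j => H (i, l) (j, l) with hA
  have hApsd : ∀ l, (A l).PosSemidef := fun l => hH.submatrix fun i : Fin n => (i, l)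
  have hsum : ptrace2 H = ∑ l, A l := by
    ext i j
    simp [ptrace2, hA, Matrix.sum_apply]
  have hmulti := FMaux.multi k' A hApsd
  rw [← hsum] at hmulti
  set P : ℝ := ∏ l, (A l).det.re with hP
  have hPnn : 0 ≤ P := Finset.prod_nonneg fun l _ => FMaux.det_re_nonneg (hApsd l)
  have hcast : ((k' + 1 : ℕ) : ℝ) = (k' : ℝ) + 1 := by push_cast; ring
  have hdiv : P ^ (((k' : ℝ) + 1)⁻¹) ≤ (ptrace2 H).det.re / ((k' + 1 : ℕ) : ℝ) ^ n := by
    rw [hcast, le_div_iff₀ (by positivity)]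
    calc P ^ (((k' : ℝ) + 1)⁻¹) * ((k' : ℝ) + 1) ^ n
        = ((k' : ℝ) + 1) ^ n * P ^ (((k' : ℝ) + 1)⁻¹) := by ring
      _ ≤ (ptrace2 H).det.re := hmulti
  have hfinal : (P ^ (((k' : ℝ) + 1)⁻¹)) ^ (k' + 1 : ℕ) = P := by
    rw [← Real.rpow_natCast (P ^ (((k' : ℝ) + 1)⁻¹)) (k' + 1), ← Real.rpow_mul hPnn,
      show ((k' : ℝ) + 1)⁻¹ * ((k' + 1 : ℕ) : ℝ) = 1 by push_cast; field_simp]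
    exact Real.rpow_one P
  calc H.det.re ≤ P := FMaux.fischer_iter (k' + 1) H hH
    _ = (P ^ (((k' : ℝ) + 1)⁻¹)) ^ (k' + 1 : ℕ) := hfinal.symm
    _ ≤ ((ptrace2 H).det.re / ((k' + 1 : ℕ) : ℝ) ^ n) ^ (k' + 1 : ℕ) :=
        pow_le_pow_left₀ (Real.rpow_nonneg hPnn _) hdiv _
end

section
/- Let H = [H_{i,j}]_{i,j=1}^n ∈ M_n(M_k) be positive semidefinite and define det₂H = [det H_{i,j}]_{i,j=1}^n. Then (tr(det₂H)/n)^n ≥ det H. -/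
open Matrix BigOperators ComplexOrder

section Helpers

variable {m : Type*} [Fintype m] [DecidableEq m]

lemma psd_det_real {M : Matrix m m ℂ} (h : M.PosSemidef) :
    ∃ r : ℝ, 0 ≤ r ∧ M.det = (r : ℂ) := by
  refine ⟨∏ i, h.1.eigenvalues i, Finset.prod_nonneg fun i _ => h.eigenvalues_nonneg i, ?_⟩
  rw [h.1.det_eq_prod_eigenvalues]
  push_cast
  rfl

lemma det_one_add_psd {N : Matrix m m ℂ} (hN : N.PosSemidef) :
    ∃ r : ℝ, 1 ≤ r ∧ (1 + N).det = (r : ℂ) := by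
  refine ⟨∏ i, (1 + hN.1.eigenvalues i), ?_, ?_⟩
  · calc (1:ℝ) = ∏ _i : m, 1 := by simp
      _ ≤ ∏ i, (1 + hN.1.eigenvalues i) :=
        Finset.prod_le_prod (fun i _ => zero_le_one)
          (fun i _ => by linarith [hN.eigenvalues_nonneg i])
  set U : Matrix m m ℂ := (hN.1.eigenvectorUnitary : Matrix m m ℂ) with hU
  have hUU : U * star U = 1 := (Matrix.mem_unitaryGroup_iff).mp hN.1.eigenvectorUnitary.2
  have key : (1 : Matrix m m ℂ) + N
      = U * (1 + diagonal (RCLike.ofReal ∘ hN.1.eigenvalues)) * star U := by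
    rw [mul_add, add_mul, mul_one, hUU]
    congr 1
    exact hN.1.spectral_theorem
  rw [key, det_mul_right_comm, hUU, one_mul]
  rw [← diagonal_one, diagonal_add, det_diagonal]
  push_cast
  rfl

lemma psd_posDef_of_det_ne_zero {M : Matrix m m ℂ} (h : M.PosSemidef) (hd : M.det ≠ 0) :
    M.PosDef := by
  refine posDef_iff_dotProduct_mulVec.mpr ⟨h.1, fun x hx => lt_of_le_of_ne (h.dotProduct_mulVec_nonneg x) fun heq => ?_⟩
  have hMx : M *ᵥ x = 0 := (h.dotProduct_mulVec_zero_iff x).mp heq.symm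
  exact hd ((Matrix.exists_mulVec_eq_zero_iff).mp ⟨x, hx, hMx⟩)

open scoped MatrixOrder in
lemma det_re_add_le {M N : Matrix m m ℂ} (hM : M.PosSemidef) (hN : N.PosSemidef) :
    M.det.re ≤ (M + N).det.re := by
  obtain ⟨a, ha, hMa⟩ := psd_det_real hM
  obtain ⟨b, hb, hMNb⟩ := psd_det_real (hM.add hN)
  by_cases h0 : M.det = 0
  · simp [h0, hMNb, hb]
  · have hMd : M.PosDef := psd_posDef_of_det_ne_zero hM h0
    set R := CFC.sqrt M with hRdef
    have hRpsd : R.PosSemidef := (CFC.sqrt_nonneg M).posSemidef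
    have hRR : R * R = M := CFC.sqrt_mul_sqrt_self M hM.nonneg
    have hRdet : R.det ≠ 0 := by
      intro h
      apply h0
      rw [← hRR, det_mul, h, zero_mul]
    have hRunit : IsUnit R := (Matrix.isUnit_iff_isUnit_det R).mpr hRdet.isUnit
    have hRinv : (R⁻¹)ᴴ = R⁻¹ := hRpsd.1.inv
    have hP : ((R⁻¹)ᴴ * N * R⁻¹).PosSemidef := hN.conjTranspose_mul_mul_same R⁻¹
    rw [hRinv] at hP
    have key : M + N = R * (1 + R⁻¹ * N * R⁻¹) * R := by
      rw [mul_add, mul_one, add_mul, hRR, ← mul_assoc, ← mul_assoc,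
        Matrix.mul_nonsing_inv R (hRdet.isUnit), one_mul, mul_assoc,
        Matrix.nonsing_inv_mul R (hRdet.isUnit), mul_one]
    obtain ⟨r, hr, hrd⟩ := det_one_add_psd hP
    have : (M + N).det = ((a * r : ℝ) : ℂ) := by
      rw [key, det_mul, det_mul, mul_right_comm, ← det_mul, hRR, hMa, hrd]
      push_cast
      ring
    rw [this, hMa]
    simp only [Complex.ofReal_re]
    nlinarith

lemma fischer_two {α β : Type*} [Fintype α] [DecidableEq α] [Fintype β] [DecidableEq β]
    {M : Matrix (α ⊕ β) (α ⊕ β) ℂ} (hM : M.PosSemidef) :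
    M.det.re ≤ (M.toBlocks₁₁).det.re * (M.toBlocks₂₂).det.re := by
  set A := M.toBlocks₁₁ with hAdef
  set B := M.toBlocks₁₂ with hBdef
  set D := M.toBlocks₂₂ with hDdef
  have hA : A.PosSemidef := hM.submatrix Sum.inl
  have hD : D.PosSemidef := hM.submatrix Sum.inr
  have hC : M.toBlocks₂₁ = Bᴴ := by
    ext i j
    exact (hM.1.apply (Sum.inr i) (Sum.inl j)).symm
  have hfrom : M = fromBlocks A B Bᴴ D := by
    rw [← hC, hAdef, hBdef, hDdef, fromBlocks_toBlocks]
  obtain ⟨a, ha0, hAa⟩ := psd_det_real hA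
  obtain ⟨d, hd0, hDd⟩ := psd_det_real hD
  by_cases hdet : A.det = 0
  · obtain ⟨x, hx, hAx⟩ := (Matrix.exists_mulVec_eq_zero_iff).mpr hdet
    set y : α ⊕ β → ℂ := Sum.elim x 0 with hy
    have hsy : star y = Sum.elim (star x) 0 := by
      funext i
      cases i <;> simp [hy]
    have hyz : star y ⬝ᵥ M *ᵥ y = 0 := by
      rw [hfrom, hy, fromBlocks_mulVec, hsy]
      simp [hAx]
    have hMy : M *ᵥ y = 0 := (hM.dotProduct_mulVec_zero_iff y).mp hyz
    have hyne : y ≠ 0 := by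
      intro h
      apply hx
      funext i
      exact congrFun h (Sum.inl i)
    have hMdet : M.det = 0 := (Matrix.exists_mulVec_eq_zero_iff).mp ⟨y, hyne, hMy⟩
    rw [hMdet, hAa, hDd]
    simpa using mul_nonneg ha0 hd0
  · have hAd : A.PosDef := psd_posDef_of_det_ne_zero hA hdet
    haveI : Invertible A := hAd.isUnit.invertible
    have hS : (D - Bᴴ * A⁻¹ * B).PosSemidef :=
      (PosDef.fromBlocks₁₁ B D hAd).mp (hfrom ▸ hM)
    have hBAB : (Bᴴ * A⁻¹ * B).PosSemidef :=
      hAd.inv.posSemidef.conjTranspose_mul_mul_same B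
    have hmono := det_re_add_le hS hBAB
    rw [sub_add_cancel] at hmono
    obtain ⟨s, hs0, hSs⟩ := psd_det_real hS
    have hMdet : M.det = ((a * s : ℝ) : ℂ) := by
      rw [hfrom, det_fromBlocks₁₁, Matrix.invOf_eq_nonsing_inv, hAa, hSs]
      push_cast
      ring
    rw [hMdet, hAa, hDd]
    simp only [Complex.ofReal_re]
    have hsd : s ≤ d := by
      rw [hSs, hDd] at hmono
      simpa using hmono
    exact mul_le_mul_of_nonneg_left hsd ha0

noncomputable def blockOf {n k : ℕ} (H : Matrix (Fin n × Fin k) (Fin n × Fin k) ℂ) (i : Fin n) :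
    Matrix (Fin k) (Fin k) ℂ := Matrix.of fun l m => H (i, l) (i, m)

def esk (n k : ℕ) : (Fin k ⊕ (Fin n × Fin k)) ≃ (Fin (n + 1) × Fin k) where
  toFun := Sum.elim (fun l => (0, l)) fun p => (p.1.succ, p.2)
  invFun p := Fin.cases (Sum.inl p.2) (fun i => Sum.inr (i, p.2)) p.1
  left_inv := by rintro (l | ⟨i, l⟩) <;> simp
  right_inv := by
    rintro ⟨i, l⟩
    induction i using Fin.cases <;> simp

lemma psd_det_re_nonneg {M : Matrix m m ℂ} (h : M.PosSemidef) : 0 ≤ M.det.re := by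
  obtain ⟨r, hr, hd⟩ := psd_det_real h
  rw [hd]
  simpa using hr

lemma fischer_blocks : ∀ (n : ℕ) {k : ℕ} (H : Matrix (Fin n × Fin k) (Fin n × Fin k) ℂ),
    H.PosSemidef → H.det.re ≤ ∏ i, (blockOf H i).det.re := by
  intro n
  induction n with
  | zero =>
    intro k H _
    simp [Matrix.det_isEmpty]
  | succ n ih =>
    intro k H hH
    set M := H.submatrix (esk n k) (esk n k) with hM
    have hMp : M.PosSemidef := hH.submatrix _
    have hdet : M.det = H.det := det_submatrix_equiv_self _ _
    have h2 := fischer_two hMp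
    have hB1 : M.toBlocks₁₁ = blockOf H 0 := rfl
    have hH'p : (M.toBlocks₂₂).PosSemidef := hMp.submatrix Sum.inr
    have hIH := ih M.toBlocks₂₂ hH'p
    have hblk : ∀ i : Fin n, blockOf M.toBlocks₂₂ i = blockOf H i.succ := fun i => rfl
    have h0nn : 0 ≤ (blockOf H 0).det.re := psd_det_re_nonneg (hH.submatrix fun l => (0, l))
    calc H.det.re = M.det.re := by rw [hdet]
      _ ≤ (M.toBlocks₁₁).det.re * (M.toBlocks₂₂).det.re := h2
      _ ≤ (blockOf H 0).det.re * ∏ i : Fin n, (blockOf H i.succ).det.re := by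
          rw [hB1]
          refine mul_le_mul_of_nonneg_left ?_ h0nn
          simpa [hblk] using hIH
      _ = ∏ i : Fin (n + 1), (blockOf H i).det.re := (Fin.prod_univ_succ fun i => (blockOf H i).det.re).symm

theorem stmt9' {n k : ℕ} (hn : 0 < n) (hk : 0 < k)
    (H : Matrix (Fin n × Fin k) (Fin n × Fin k) ℂ) (hH : H.PosSemidef) :
    ((Matrix.of fun i j : Fin n => (Matrix.of fun l m : Fin k => H (i, l) (j, m)).det :
      Matrix (Fin n) (Fin n) ℂ).trace.re / n) ^ n ≥ H.det.re := by
  have hn' : (n : ℝ) ≠ 0 := Nat.cast_ne_zero.mpr hn.ne'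
  set a : Fin n → ℝ := fun i => (blockOf H i).det.re with ha
  have hann : ∀ i : Fin n, 0 ≤ a i := fun i =>
    psd_det_re_nonneg (hH.submatrix fun l => (i, l))
  -- trace computation
  have htr : (Matrix.of fun i j : Fin n => (Matrix.of fun l m : Fin k => H (i, l) (j, m)).det :
      Matrix (Fin n) (Fin n) ℂ).trace.re = ∑ i, a i := by
    rw [Matrix.trace]
    rw [Complex.re_sum]
    rfl
  rw [htr]
  -- AM-GM
  have amgm := Real.geom_mean_le_arith_mean_weighted Finset.univ (fun _ => 1 / (n : ℝ)) a
    (fun i _ => by positivity) (by simp [hn']) (fun i _ => hann i)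
  have hprod : (∏ i, a i ^ (1 / (n : ℝ))) ^ n = ∏ i, a i := by
    rw [← Finset.prod_pow]
    refine Finset.prod_congr rfl fun i _ => ?_
    rw [← Real.rpow_natCast (a i ^ (1 / (n : ℝ))) n, ← Real.rpow_mul (hann i)]
    rw [one_div_mul_cancel hn', Real.rpow_one]
  have hsum : ∑ i, (1 / (n : ℝ)) * a i = (∑ i, a i) / n := by
    rw [Finset.sum_div]
    refine Finset.sum_congr rfl fun i _ => ?_
    ring
  have hpow : (∏ i, a i ^ (1 / (n : ℝ))) ^ n ≤ ((∑ i, a i) / n) ^ n := by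
    refine pow_le_pow_left₀ (Finset.prod_nonneg fun i _ => Real.rpow_nonneg (hann i) _) ?_ n
    rw [← hsum]
    exact amgm
  rw [hprod] at hpow
  calc H.det.re ≤ ∏ i, a i := fischer_blocks n H hH
    _ ≤ ((∑ i, a i) / n) ^ n := hpow

end Helpers

/-- Second partial determinant: det₂H = [det H_{i,j}]_{i,j}. -/
noncomputable def pdet2 {n k : ℕ} (H : Matrix (Fin n × Fin k) (Fin n × Fin k) ℂ) :
    Matrix (Fin n) (Fin n) ℂ :=
  Matrix.of fun i j => (Matrix.of fun l m : Fin k => H (i, l) (j, m)).det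

/-- Choi: (tr(det₂H)/n)^n ≥ det H. -/
theorem stmt9 {n k : ℕ} (hn : 0 < n) (hk : 0 < k)
    (H : Matrix (Fin n × Fin k) (Fin n × Fin k) ℂ) (hH : H.PosSemidef) :
    ((pdet2 H).trace.re / n) ^ n ≥ H.det.re := by
  unfold pdet2
  exact stmt9' hn hk H hH
end
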